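/- Let E be a strongly archimedean convex SEA with property A and let S⊆E. If (a_n) is a sequence of mutually commuting elements of the commutant S' that converges in norm to a∈E, then a∈S'. -/

import Mathlib

universe u

/-- An effect algebra: the partially defined sum `⊕` is encoded via `Option`. -/
class EffectAlgebra (E : Type u) where
  oplus : E → E → Option E
  zero : E
  one : E
  oplus_comm : ∀ a b : E, oplus a b = oplus b a
  oplus_assoc : ∀ {a b c ab abc : E}, oplus a b = some ab → oplus ab c = some abc →
    ∃ bc : E, oplus b c = some bc ∧ oplus a bc = some abc
  exists_perp : ∀ a : E, ∃ b : E, oplus a b = some one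
  perp_unique : ∀ {a b c : E}, oplus a b = some one → oplus a c = some one → b = c
  oplus_one : ∀ {a b : E}, oplus a one = some b → a = zero

namespace EffectAlgebra

variable {E : Type u} [EffectAlgebra E]

/-- The orthosupplement `a^⊥`. -/
noncomputable def perp (a : E) : E := Classical.choose (exists_perp a)

/-- The partial order: `a ≤ b` iff `a ⊕ c = b` for some `c`. -/
def le (a b : E) : Prop := ∃ c : E, oplus a c = some b

/-- Sharp elements. -/
def Sharp (a : E) : Prop := ∀ x : E, le x a → le x (perp a) → x = zero

/-- Finite orthosums of lists of elements. -/
def osum : List E → Option E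
  | [] => some zero
  | a :: l => (osum l).bind fun s => oplus a s

/-- Mackey compatibility `a ↔ b`. -/
def MCompat (a b : E) : Prop :=
  ∃ a₁ b₁ c s t : E, oplus a₁ b₁ = some s ∧ oplus s c = some t ∧
    oplus a₁ c = some a ∧ oplus b₁ c = some b

/-- `a` is the supremum of the sequence `f`. -/
def IsSupSeq (f : ℕ → E) (a : E) : Prop :=
  (∀ n, le (f n) a) ∧ ∀ b : E, (∀ n, le (f n) b) → le a b

/-- `a` is the infimum of the sequence `f`. -/
def IsInfSeq (f : ℕ → E) (a : E) : Prop :=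
  (∀ n, le a (f n)) ∧ ∀ b : E, (∀ n, le b (f n)) → le b a

/-- `a` is the infimum of the set `S`. -/
def IsInfSet (S : Set E) (a : E) : Prop :=
  (∀ x ∈ S, le a x) ∧ ∀ b : E, (∀ x ∈ S, le b x) → le b a

/-- `a` is the supremum of `f` computed inside the subset `S`. -/
def IsSupSeqIn (S : Set E) (f : ℕ → E) (a : E) : Prop :=
  a ∈ S ∧ (∀ n, le (f n) a) ∧ ∀ b ∈ S, (∀ n, le (f n) b) → le a b

variable (E) in
/-- Monotone σ-completeness: every ascending sequence has a supremum. -/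
def MonotoneSigmaComplete : Prop :=
  ∀ f : ℕ → E, (∀ n, le (f n) (f (n + 1))) → ∃ a : E, IsSupSeq f a

end EffectAlgebra

open EffectAlgebra in
/-- A compression base `(J_p)_{p ∈ P}` on an effect algebra. -/
structure CompressionBase (E : Type u) [EffectAlgebra E] where
  P : Set E
  J : E → E → E
  zero_mem : zero ∈ P
  one_mem : one ∈ P
  perp_mem : ∀ p ∈ P, perp p ∈ P
  oplus_mem : ∀ p ∈ P, ∀ q ∈ P, ∀ r : E, oplus p q = some r → r ∈ P
  normal : ∀ e f d s t x y : E, oplus e f = some s → oplus s d = some t →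
    oplus e d = some x → x ∈ P → oplus f d = some y → y ∈ P → d ∈ P
  additive : ∀ p ∈ P, ∀ a b c : E, oplus a b = some c →
    oplus (J p a) (J p b) = some (J p c)
  retraction : ∀ p ∈ P, ∀ a : E, le a p → J p a = a
  focus : ∀ p ∈ P, J p one = p
  compression : ∀ p ∈ P, ∀ a : E, (J p a = zero ↔ le a (perp p))
  compose : ∀ p ∈ P, ∀ q ∈ P, ∀ r ∈ P, ∀ s t qr : E,
    oplus p q = some s → oplus s r = some t → oplus q r = some qr →
    ∀ a : E, J s (J qr a) = J q a

namespace CompressionBase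

open EffectAlgebra

variable {E : Type u} [EffectAlgebra E] (cb : CompressionBase E)

/-- The commutant `C(p)` of a projection `p`. -/
noncomputable def Cset (p : E) : Set E :=
  {a : E | oplus (cb.J p a) (cb.J (perp p) a) = some a}

/-- `PC(a)`: projections compatible with `a`. -/
noncomputable def PC (a : E) : Set E := {p : E | p ∈ cb.P ∧ a ∈ cb.Cset p}

/-- The P-bicommutant `P(a) = PC(PC(a) ∪ {a})`. -/
noncomputable def Pbicomm (a : E) : Set E :=
  {p : E | p ∈ cb.P ∧ a ∈ cb.Cset p ∧ ∀ q ∈ cb.PC a, q ∈ cb.Cset p}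

/-- `p` is the projection cover of `a`. -/
def IsProjCover (a p : E) : Prop :=
  p ∈ cb.P ∧ ∀ q ∈ cb.P, (le a q ↔ le p q)

/-- The projection cover property. -/
def ProjCoverProp : Prop := ∀ a : E, ∃ p : E, cb.IsProjCover a p

/-- `B` is a Boolean subalgebra of the set of projections. -/
noncomputable def BooleanSub (B : Set E) : Prop :=
  B ⊆ cb.P ∧ zero ∈ B ∧ one ∈ B ∧ (∀ p ∈ B, perp p ∈ B) ∧
  (∀ p ∈ B, ∀ q ∈ B, MCompat p q) ∧
  (∀ p ∈ B, ∀ q ∈ B, ∀ r : E, oplus p q = some r → r ∈ B)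

/-- The b-property. -/
noncomputable def BProperty : Prop :=
  ∀ a : E, ∃ B : Set E, cb.BooleanSub B ∧
    ∀ p ∈ cb.P, (a ∈ cb.Cset p ↔ ∀ b ∈ B, b ∈ cb.Cset p)

/-- Commutativity `aCb` of b-elements. -/
noncomputable def CommuteC (a b : E) : Prop :=
  ∀ p ∈ cb.Pbicomm a, ∀ q ∈ cb.Pbicomm b, MCompat p q

/-- The b-comparability property. -/
noncomputable def BComparability : Prop :=
  cb.BProperty ∧
  ∀ e f : E, cb.CommuteC e f → ∃ p : E, p ∈ cb.Pbicomm e ∧ p ∈ cb.Pbicomm f ∧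
    le (cb.J p e) (cb.J p f) ∧ le (cb.J (perp p) f) (cb.J (perp p) e)

/-- Spectrality: projection cover property plus b-comparability. -/
noncomputable def Spectral : Prop := cb.ProjCoverProp ∧ cb.BComparability

/-- `p` is the floor of `a` (the largest projection below `a`). -/
def IsFloor (a p : E) : Prop :=
  p ∈ cb.P ∧ le p a ∧ ∀ q ∈ cb.P, le q a → le q p

end CompressionBase

open EffectAlgebra in
/-- A sequential effect algebra (SEA). -/
class SEA (E : Type u) [EffectAlgebra E] where
  seq : E → E → E
  seq_oplus : ∀ a b c d : E, oplus b c = some d →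
    oplus (seq a b) (seq a c) = some (seq a d)
  one_seq : ∀ a : E, seq one a = a
  seq_zero_symm : ∀ a b : E, seq a b = zero → seq b a = zero
  comm_perp : ∀ a b : E, seq a b = seq b a → seq a (perp b) = seq (perp b) a
  comm_assoc : ∀ a b c : E, seq a b = seq b a → seq a (seq b c) = seq (seq a b) c
  comm_seq : ∀ a b c : E, seq c a = seq a c → seq c b = seq b c →
    seq c (seq a b) = seq (seq a b) c
  comm_oplus : ∀ a b c d : E, seq c a = seq a c → seq c b = seq b c →
    oplus a b = some d → seq c d = seq d c

namespace EffectAlgebra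

variable {E : Type u} [EffectAlgebra E]

section SEAdefs

variable [SEA E]

/-- `a | b` : the sequential product commutes. -/
def Commutes (a b : E) : Prop := SEA.seq a b = SEA.seq b a

/-- The commutant `S'` of a subset. -/
def commutant (S : Set E) : Set E := {a : E | ∀ s ∈ S, Commutes a s}

/-- The bicommutant `S''`. -/
def bicommutant (S : Set E) : Set E := commutant (commutant S)

/-- A sub-SEA: a sub-effect algebra closed under the sequential product. -/
noncomputable def SubSEA (S : Set E) : Prop :=
  zero ∈ S ∧ one ∈ S ∧ (∀ a ∈ S, perp a ∈ S) ∧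
  (∀ a ∈ S, ∀ b ∈ S, ∀ c : E, oplus a b = some c → c ∈ S) ∧
  (∀ a ∈ S, ∀ b ∈ S, SEA.seq a b ∈ S)

/-- A commutative sub-SEA. -/
noncomputable def CommSubSEA (S : Set E) : Prop :=
  SubSEA S ∧ ∀ a ∈ S, ∀ b ∈ S, Commutes a b

/-- A maximal commutative sub-SEA. -/
noncomputable def MaxCommSubSEA (S : Set E) : Prop :=
  CommSubSEA S ∧ ∀ T : Set E, CommSubSEA T → S ⊆ T → T = S

/-- `C(p)` for the canonical compression base `J_p = p ∘ ·` of a SEA. -/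
noncomputable def sC (p : E) : Set E :=
  {a : E | oplus (SEA.seq p a) (SEA.seq (perp p) a) = some a}

/-- `PC(a)` for the canonical compression base. -/
noncomputable def sPC (a : E) : Set E := {p : E | Sharp p ∧ a ∈ sC p}

/-- The P-bicommutant `P(a)` for the canonical compression base. -/
noncomputable def sPbicomm (a : E) : Set E :=
  {p : E | Sharp p ∧ a ∈ sC p ∧ ∀ q ∈ sPC a, q ∈ sC p}

/-- `p` is the projection cover of `a` (canonical compression base). -/
noncomputable def sIsProjCover (a p : E) : Prop :=
  Sharp p ∧ ∀ q : E, Sharp q → (le a q ↔ le p q)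

variable (E) in
/-- The projection cover property (canonical compression base). -/
noncomputable def sProjCoverProp : Prop := ∀ a : E, ∃ p : E, sIsProjCover a p

/-- `B` is a Boolean subalgebra of the sharp elements. -/
noncomputable def sBooleanSub (B : Set E) : Prop :=
  (∀ p ∈ B, Sharp p) ∧ zero ∈ B ∧ one ∈ B ∧ (∀ p ∈ B, perp p ∈ B) ∧
  (∀ p ∈ B, ∀ q ∈ B, MCompat p q) ∧
  (∀ p ∈ B, ∀ q ∈ B, ∀ r : E, oplus p q = some r → r ∈ B)

variable (E) in
/-- The b-property (canonical compression base). -/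
noncomputable def sBProperty : Prop :=
  ∀ a : E, ∃ B : Set E, sBooleanSub B ∧
    ∀ p : E, Sharp p → (a ∈ sC p ↔ ∀ b ∈ B, b ∈ sC p)

/-- `aCb` (canonical compression base). -/
noncomputable def sCommuteC (a b : E) : Prop :=
  ∀ p ∈ sPbicomm a, ∀ q ∈ sPbicomm b, MCompat p q

variable (E) in
/-- The b-comparability property (canonical compression base). -/
noncomputable def sBComparability : Prop :=
  sBProperty E ∧
  ∀ e f : E, sCommuteC e f → ∃ p : E, p ∈ sPbicomm e ∧ p ∈ sPbicomm f ∧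
    le (SEA.seq p e) (SEA.seq p f) ∧
    le (SEA.seq (perp p) f) (SEA.seq (perp p) e)

variable (E) in
/-- Spectrality of a SEA with respect to its canonical compression base. -/
noncomputable def sSpectral : Prop := sProjCoverProp E ∧ sBComparability E

/-- `p` is the floor of `a` (canonical compression base). -/
noncomputable def sIsFloor (a p : E) : Prop :=
  Sharp p ∧ le p a ∧ ∀ q : E, Sharp q → le q a → le q p

variable (E) in
/-- Property A. -/
def PropertyA : Prop :=
  ∀ (f : ℕ → E) (a b : E), (∀ n, le (f n) (f (n + 1))) →
    (∀ m n, Commutes (f m) (f n)) → IsSupSeq f a →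
    (∀ n, Commutes (f n) b) → Commutes a b

variable (E) in
/-- A σ-SEA. -/
def SigmaSEA : Prop :=
  MonotoneSigmaComplete E ∧
  ∀ (f : ℕ → E) (m : E), (∀ n, le (f (n + 1)) (f n)) → IsInfSeq f m →
    ∀ b : E, IsInfSeq (fun n => SEA.seq b (f n)) (SEA.seq b m) ∧
      ((∀ n, Commutes b (f n)) → Commutes b m)

/-- Iterated sequential powers: `seqPow a n = a^(n+1)`. -/
def seqPow (a : E) : ℕ → E
  | 0 => a
  | n + 1 => SEA.seq a (seqPow a n)

end SEAdefs

end EffectAlgebra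

open EffectAlgebra in
/-- A convex effect algebra: scalar multiplication by reals in `[0,1]`. -/
class ConvexEA (E : Type u) [EffectAlgebra E] where
  smul : ℝ → E → E
  smul_smul : ∀ (l m : ℝ) (a : E), 0 ≤ l → l ≤ 1 → 0 ≤ m → m ≤ 1 →
    smul m (smul l a) = smul (l * m) a
  smul_add_coeff : ∀ (l m : ℝ) (a : E), 0 ≤ l → 0 ≤ m → l + m ≤ 1 →
    oplus (smul l a) (smul m a) = some (smul (l + m) a)
  smul_oplus : ∀ (l : ℝ) (a b c : E), 0 ≤ l → l ≤ 1 → oplus a b = some c →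
    oplus (smul l a) (smul l b) = some (smul l c)
  one_smul : ∀ a : E, smul 1 a = a

namespace EffectAlgebra

variable {E : Type u} [EffectAlgebra E]

section Convexdefs

variable [ConvexEA E]

variable (E) in
/-- Strong archimedeanity. -/
def StronglyArchimedean : Prop :=
  ∀ a b c : E,
    (∀ n : ℕ, ∃ d : E, oplus b (ConvexEA.smul (1 / (n + 1) : ℝ) c) = some d ∧ le a d) →
    le a b

/-- `DistLE a b ε` encodes `‖a - b‖ ≤ ε` in the order unit norm:
`(1/2)a ≤ (1/2)b ⊕ (ε/2)1` and symmetrically (with `ε` clamped to `[0,1]`). -/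
def DistLE (a b : E) (ε : ℝ) : Prop :=
  (∃ d : E, oplus (ConvexEA.smul (2⁻¹ : ℝ) b) (ConvexEA.smul (min ε 1 / 2) one) = some d ∧
    le (ConvexEA.smul (2⁻¹ : ℝ) a) d) ∧
  (∃ d : E, oplus (ConvexEA.smul (2⁻¹ : ℝ) a) (ConvexEA.smul (min ε 1 / 2) one) = some d ∧
    le (ConvexEA.smul (2⁻¹ : ℝ) b) d)

/-- Norm convergence of a sequence. -/
def NormLimit (f : ℕ → E) (a : E) : Prop :=
  ∀ ε : ℝ, 0 < ε → ∃ N : ℕ, ∀ n ≥ N, DistLE (f n) a ε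

/-- Cauchy sequences with respect to the order unit norm. -/
def CauchySeqE (f : ℕ → E) : Prop :=
  ∀ ε : ℝ, 0 < ε → ∃ N : ℕ, ∀ m ≥ N, ∀ n ≥ N, DistLE (f m) (f n) ε

variable (E) in
/-- Norm completeness. -/
def NormComplete : Prop := ∀ f : ℕ → E, CauchySeqE f → ∃ a : E, NormLimit f a

/-- A norm-closed subset. -/
def NormClosedSet (S : Set E) : Prop :=
  ∀ (f : ℕ → E) (a : E), (∀ n, f n ∈ S) → NormLimit f a → a ∈ S

/-- A norm-complete subset. -/
def NormCompleteSet (S : Set E) : Prop :=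
  ∀ f : ℕ → E, (∀ n, f n ∈ S) → CauchySeqE f → ∃ a ∈ S, NormLimit f a

/-- One-dimensional elements. -/
def OneDim (a : E) : Prop :=
  ∀ b : E, le b a → ∃ t : ℝ, 0 ≤ t ∧ t ≤ 1 ∧ b = ConvexEA.smul t a

/-- `l` is a representation of `a` as a simple element:
`a = ⊕ μ_i p_i` with `μ_i ∈ [0,1]`, `p_i` sharp and `⊕ p_i = 1`. -/
noncomputable def SimpleRep (a : E) (l : List (ℝ × E)) : Prop :=
  (∀ x ∈ l, x.1 ∈ Set.Icc (0 : ℝ) 1 ∧ Sharp x.2) ∧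
  osum (l.map Prod.snd) = some one ∧
  osum (l.map fun x => ConvexEA.smul x.1 x.2) = some a

/-- Simple elements. -/
noncomputable def SimpleElem (a : E) : Prop := ∃ l : List (ℝ × E), SimpleRep a l

/-- A reduced representation: strictly increasing coefficients, nonzero sharp elements. -/
noncomputable def ReducedRep (a : E) (l : List (ℝ × E)) : Prop :=
  SimpleRep a l ∧ (l.map Prod.fst).Chain' (· < ·) ∧ ∀ x ∈ l, x.2 ≠ zero

end Convexdefs

section SpecRes

variable [SEA E] [ConvexEA E]

/-- `p` is the spectral resolution of `a` (canonical compression base): a family of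
projections in the bicommutant of `a`, nondecreasing and right continuous on `[0,1]`,
with `J_{p_λ}(a) ≤ λ p_λ` and `λ p_λ^⊥ ≤ J_{p_λ^⊥}(a)`. -/
noncomputable def sIsSpecRes (a : E) (p : ℝ → E) : Prop :=
  (∀ l : ℝ, 0 ≤ l → l ≤ 1 → p l ∈ sPbicomm a) ∧
  (∀ l m : ℝ, 0 ≤ l → l ≤ m → m ≤ 1 → le (p l) (p m)) ∧
  (∀ l : ℝ, 0 ≤ l → l < 1 →
    IsInfSet {x : E | ∃ m : ℝ, l < m ∧ m ≤ 1 ∧ x = p m} (p l)) ∧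
  (∀ l : ℝ, 0 ≤ l → l ≤ 1 →
    le (SEA.seq (p l) a) (ConvexEA.smul l (p l)) ∧
    le (ConvexEA.smul l (perp (p l))) (SEA.seq (perp (p l)) a))

end SpecRes

end EffectAlgebra

namespace CompressionBase

open EffectAlgebra

variable {E : Type u} [EffectAlgebra E] [ConvexEA E] (cb : CompressionBase E)

/-- `p` is the spectral resolution of `a` with respect to the compression base `cb`. -/
noncomputable def IsSpecRes (a : E) (p : ℝ → E) : Prop :=
  (∀ l : ℝ, 0 ≤ l → l ≤ 1 → p l ∈ cb.Pbicomm a) ∧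
  (∀ l m : ℝ, 0 ≤ l → l ≤ m → m ≤ 1 → le (p l) (p m)) ∧
  (∀ l : ℝ, 0 ≤ l → l < 1 →
    IsInfSet {x : E | ∃ m : ℝ, l < m ∧ m ≤ 1 ∧ x = p m} (p l)) ∧
  (∀ l : ℝ, 0 ≤ l → l ≤ 1 →
    le (cb.J (p l) a) (ConvexEA.smul l (p l)) ∧
    le (ConvexEA.smul l (perp (p l))) (cb.J (perp (p l)) a))

end CompressionBase

namespace EffectAlgebra

section S8EA

variable {E : Type u} [EffectAlgebra E]

theorem s8_one_oplus_zero : oplus (one : E) zero = some one := by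
  obtain ⟨b, hb⟩ := exists_perp (one : E)
  have hb' : oplus b one = some one := by rw [oplus_comm]; exact hb
  have hbz : b = zero := oplus_one hb'
  rw [hbz] at hb; exact hb

theorem s8_perp_spec (a : E) : oplus a (perp a) = some one :=
  Classical.choose_spec (exists_perp a)

theorem s8_perp_eq_of {a b : E} (h : oplus a b = some one) : perp a = b :=
  perp_unique (s8_perp_spec a) h

theorem s8_oplus_zero (a : E) : oplus a zero = some a := by
  have h1 : oplus (perp a) a = some one := by rw [oplus_comm]; exact s8_perp_spec a
  obtain ⟨bc, hbc, habc⟩ := oplus_assoc h1 s8_one_oplus_zero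
  have hba : bc = a := perp_unique habc h1
  rw [hba] at hbc; exact hbc

theorem s8_zero_oplus (a : E) : oplus zero a = some a := by
  rw [oplus_comm]; exact s8_oplus_zero a

theorem s8_perp_perp (a : E) : perp (perp a) = a := by
  apply perp_unique (s8_perp_spec (perp a))
  rw [oplus_comm]; exact s8_perp_spec a

theorem s8_le_refl (a : E) : le a a := ⟨zero, s8_oplus_zero a⟩

theorem s8_le_one (a : E) : le a one := ⟨perp a, s8_perp_spec a⟩

theorem s8_le_trans {a b c : E} (h : le a b) (h' : le b c) : le a c := by
  obtain ⟨x, hx⟩ := h; obtain ⟨y, hy⟩ := h'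
  obtain ⟨e, _, h2⟩ := oplus_assoc hx hy
  exact ⟨e, h2⟩

theorem s8_cancel {a b b' c : E} (h : oplus a b = some c) (h' : oplus a b' = some c) :
    b = b' := by
  obtain ⟨y, hy1, hy2⟩ := oplus_assoc h (s8_perp_spec c)
  obtain ⟨y', hy1', hy2'⟩ := oplus_assoc h' (s8_perp_spec c)
  have hyy : y = y' := perp_unique hy2 hy2'
  rw [← hyy] at hy1'
  obtain ⟨z, hz1, hz2⟩ := oplus_assoc hy1 (s8_perp_spec y)
  obtain ⟨z', hz1', hz2'⟩ := oplus_assoc hy1' (s8_perp_spec y)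
  have hzz : z = z' := by rw [hz1] at hz1'; exact Option.some.inj hz1'
  rw [← hzz] at hz2'
  have h1 : oplus z b = some one := by rw [oplus_comm]; exact hz2
  have h2 : oplus z b' = some one := by rw [oplus_comm]; exact hz2'
  exact perp_unique h1 h2

theorem s8_assoc' {a b c bc abc : E} (h1 : oplus b c = some bc) (h2 : oplus a bc = some abc) :
    ∃ ab, oplus a b = some ab ∧ oplus ab c = some abc := by
  rw [oplus_comm] at h1 h2
  obtain ⟨ba, hba, hcba⟩ := oplus_assoc h1 h2
  rw [oplus_comm] at hba hcba
  exact ⟨ba, hba, hcba⟩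

theorem s8_le_of_oplus {a b c : E} (h : oplus a b = some c) : le a c := ⟨b, h⟩

theorem s8_le_of_oplus_right {a b c : E} (h : oplus a b = some c) : le b c :=
  ⟨a, by rw [oplus_comm]; exact h⟩

theorem s8_mono_left {a a' z v w : E} (h : le a a') (hv : oplus a z = some v)
    (hw : oplus a' z = some w) : le v w := by
  obtain ⟨c, hc⟩ := h
  obtain ⟨e2, he2, hae2⟩ := oplus_assoc hc hw
  have he2' : oplus z c = some e2 := by rw [oplus_comm]; exact he2
  obtain ⟨az, haz, hazc⟩ := s8_assoc' he2' hae2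
  have hav : az = v := by rw [haz] at hv; exact Option.some.inj hv
  rw [hav] at hazc
  exact ⟨c, hazc⟩

theorem s8_mono_right {a b b' v w : E} (h : le b b') (hv : oplus a b = some v)
    (hw : oplus a b' = some w) : le v w := by
  rw [oplus_comm] at hv hw
  exact s8_mono_left h hv hw

theorem s8_add_le_left {a a' z w : E} (h : le a a') (hw : oplus a' z = some w) :
    ∃ v, oplus a z = some v ∧ le v w := by
  obtain ⟨c, hc⟩ := h
  obtain ⟨e, he, hae⟩ := oplus_assoc hc hw
  have he' : oplus z c = some e := by rw [oplus_comm]; exact he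
  obtain ⟨v, hv, hvc⟩ := s8_assoc' he' hae
  exact ⟨v, hv, ⟨c, hvc⟩⟩

theorem s8_oplus_le_oplus {a a' b b' t : E} (ha : le a a') (hb : le b b')
    (ht : oplus a' b' = some t) : ∃ s, oplus a b = some s ∧ le s t := by
  obtain ⟨t1, ht1, ht1t⟩ := s8_add_le_left ha ht
  have ht1' : oplus b' a = some t1 := by rw [oplus_comm]; exact ht1
  obtain ⟨s, hsx, hst⟩ := s8_add_le_left hb ht1'
  have hs' : oplus a b = some s := by rw [oplus_comm]; exact hsx
  exact ⟨s, hs', s8_le_trans hst ht1t⟩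

end S8EA

section S8SEA

variable {E : Type u} [EffectAlgebra E] [SEA E]

theorem s8_seq_zero_right (a : E) : SEA.seq a (zero : E) = zero :=
  s8_cancel (SEA.seq_oplus a zero zero zero (s8_zero_oplus zero))
    (s8_oplus_zero (SEA.seq a zero))

theorem s8_seq_zero_left (a : E) : SEA.seq (zero : E) a = zero :=
  SEA.seq_zero_symm a zero (s8_seq_zero_right a)

theorem s8_comm_zero (a : E) : Commutes a (zero : E) := by
  show SEA.seq a zero = SEA.seq zero a
  rw [s8_seq_zero_right, s8_seq_zero_left]

theorem s8_comm_zero' (a : E) : Commutes (zero : E) a := (s8_comm_zero a).symm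

theorem s8_comm_one (a : E) : Commutes a (one : E) := by
  have h1 : SEA.seq a (perp a) = SEA.seq (perp a) a := SEA.comm_perp a a rfl
  exact SEA.comm_oplus a (perp a) a one rfl h1 (s8_perp_spec a)

theorem s8_seq_one (a : E) : SEA.seq a (one : E) = a := by
  have h := s8_comm_one a
  show SEA.seq a one = a
  rw [h, SEA.one_seq]

end S8SEA

section S8Cvx

variable {E : Type u} [EffectAlgebra E] [ConvexEA E]

theorem s8_smul_zero (a : E) : ConvexEA.smul (0:ℝ) a = zero := by
  have h := ConvexEA.smul_add_coeff (0:ℝ) 0 a le_rfl le_rfl (by norm_num)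
  rw [show (0:ℝ)+0 = 0 by norm_num] at h
  exact s8_cancel h (s8_oplus_zero (ConvexEA.smul (0:ℝ) a))

theorem s8_half_double (z : E) :
    oplus (ConvexEA.smul (2⁻¹:ℝ) z) (ConvexEA.smul (2⁻¹:ℝ) z) = some z := by
  have h := ConvexEA.smul_add_coeff (2⁻¹:ℝ) 2⁻¹ z (by norm_num) (by norm_num) (by norm_num)
  rw [show (2⁻¹:ℝ)+2⁻¹ = 1 by norm_num, ConvexEA.one_smul] at h
  exact h

theorem s8_quarter_double (z : E) :
    oplus (ConvexEA.smul (4⁻¹:ℝ) z) (ConvexEA.smul (4⁻¹:ℝ) z)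
      = some (ConvexEA.smul (2⁻¹:ℝ) z) := by
  have h := ConvexEA.smul_add_coeff (4⁻¹:ℝ) 4⁻¹ z (by norm_num) (by norm_num) (by norm_num)
  rw [show (4⁻¹:ℝ)+4⁻¹ = 2⁻¹ by norm_num] at h
  exact h

theorem s8_double_eq {x z : E} (h : oplus x x = some z) : x = ConvexEA.smul (2⁻¹:ℝ) z := by
  have h2 := ConvexEA.smul_oplus (2⁻¹:ℝ) x x z (by norm_num) (by norm_num) h
  rw [s8_half_double x] at h2
  exact Option.some.inj h2

theorem s8_smul_le {l : ℝ} {a b : E} (hl0 : 0 ≤ l) (hl1 : l ≤ 1) (h : le a b) :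
    le (ConvexEA.smul l a) (ConvexEA.smul l b) := by
  obtain ⟨c, hc⟩ := h
  exact ⟨ConvexEA.smul l c, ConvexEA.smul_oplus l a c b hl0 hl1 hc⟩

theorem s8_smul_coeff_le {l m : ℝ} (a : E) (hl0 : 0 ≤ l) (hlm : l ≤ m) (hm1 : m ≤ 1) :
    le (ConvexEA.smul l a) (ConvexEA.smul m a) := by
  have h := ConvexEA.smul_add_coeff l (m - l) a hl0 (by linarith) (by linarith)
  rw [show l + (m - l) = m by ring] at h
  exact ⟨ConvexEA.smul (m-l) a, h⟩

theorem s8_le_smul_one {l : ℝ} (a : E) (hl0 : 0 ≤ l) (hl1 : l ≤ 1) :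
    le (ConvexEA.smul l a) (ConvexEA.smul l one) := s8_smul_le hl0 hl1 (s8_le_one a)

theorem s8_oplus_smul_one {μ ν : ℝ} (hμ : 0 ≤ μ) (hν : 0 ≤ ν) (h1 : μ + ν ≤ 1) :
    oplus (ConvexEA.smul μ (one:E)) (ConvexEA.smul ν one)
      = some (ConvexEA.smul (μ+ν) one) :=
  ConvexEA.smul_add_coeff μ ν one hμ hν h1

theorem s8_def_add_scalar {z : E} {p ν : ℝ} (hz : le z (ConvexEA.smul p one))
    (hν : 0 ≤ ν) (hp : 0 ≤ p) (h1 : p + ν ≤ 1) :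
    ∃ w, oplus z (ConvexEA.smul ν one) = some w ∧ le w (ConvexEA.smul (p+ν) one) :=
  s8_oplus_le_oplus hz (s8_le_refl _) (s8_oplus_smul_one hp hν h1)

theorem s8_rearrange4 {p q r m pp qq : E} (h1 : oplus p q = some r)
    (h2 : oplus r r = some m) (hp : oplus p p = some pp) (hq : oplus q q = some qq) :
    oplus pp qq = some m := by
  obtain ⟨e, he, hpe⟩ := oplus_assoc h1 h2
  have h1' : oplus q p = some r := by rw [oplus_comm]; exact h1
  obtain ⟨qq', hqq', hqq'p⟩ := s8_assoc' h1' he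
  have hqqe : qq = qq' := by rw [hqq'] at hq; exact (Option.some.inj hq).symm
  have hpqq : oplus p qq = some e := by rw [hqqe, oplus_comm]; exact hqq'p
  obtain ⟨pp', hpp', hppq⟩ := s8_assoc' hpqq hpe
  have hppe : pp' = pp := by rw [hpp'] at hp; exact Option.some.inj hp
  rw [hppe] at hppq
  exact hppq

theorem s8_unscale {x y : E}
    (h : le (ConvexEA.smul (2⁻¹:ℝ) x) (ConvexEA.smul (2⁻¹:ℝ) y)) : le x y := by
  obtain ⟨t, ht⟩ := h
  have htley : le t (ConvexEA.smul (2⁻¹:ℝ) y) := s8_le_of_oplus_right ht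
  have hy1 : le (ConvexEA.smul (2⁻¹:ℝ) y) (ConvexEA.smul (2⁻¹:ℝ) (one:E)) :=
    s8_le_smul_one y (by norm_num) (by norm_num)
  have ht1 : le t (ConvexEA.smul (2⁻¹:ℝ) (one:E)) := s8_le_trans htley hy1
  obtain ⟨t2, ht2, _⟩ := s8_oplus_le_oplus ht1 ht1 (s8_half_double (one:E))
  have hthalf : t = ConvexEA.smul (2⁻¹:ℝ) t2 := s8_double_eq ht2
  rw [hthalf] at ht
  have hfin := s8_rearrange4 ht (s8_half_double y) (s8_half_double x) (s8_half_double t2)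
  exact ⟨t2, hfin⟩

theorem s8_halfhalf (x : E) :
    ConvexEA.smul (2⁻¹:ℝ) (ConvexEA.smul (2⁻¹:ℝ) x) = ConvexEA.smul (4⁻¹:ℝ) x := by
  rw [ConvexEA.smul_smul 2⁻¹ 2⁻¹ x (by norm_num) (by norm_num) (by norm_num) (by norm_num)]
  norm_num

/-- `Le2 x y μ` means `x ≤ y ⊕ μ·1` (with the sum defined). -/
def Le2 (x y : E) (μ : ℝ) : Prop :=
  ∃ d, oplus y (ConvexEA.smul μ one) = some d ∧ le x d

theorem s8_Le2_halve {x y : E} {μ : ℝ} (h : Le2 x y μ) (h0 : 0 ≤ μ) (h1 : μ ≤ 1) :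
    Le2 (ConvexEA.smul (2⁻¹:ℝ) x) (ConvexEA.smul (2⁻¹:ℝ) y) (μ * 2⁻¹) := by
  obtain ⟨d, hd, hxd⟩ := h
  have h2 := ConvexEA.smul_oplus (2⁻¹:ℝ) y (ConvexEA.smul μ one) d (by norm_num) (by norm_num) hd
  rw [ConvexEA.smul_smul μ (2⁻¹:ℝ) one h0 h1 (by norm_num) (by norm_num)] at h2
  exact ⟨ConvexEA.smul (2⁻¹:ℝ) d, h2, s8_smul_le (by norm_num) (by norm_num) hxd⟩

theorem s8_Le2_mono {x z : E} {μ ν p : ℝ} (h : Le2 x z μ) (hz : le z (ConvexEA.smul p one))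
    (h0 : 0 ≤ μ) (hμν : μ ≤ ν) (hp : 0 ≤ p) (h1 : p + ν ≤ 1) : Le2 x z ν := by
  obtain ⟨d, hd, hxd⟩ := h
  obtain ⟨D, hD, _⟩ := s8_def_add_scalar hz (by linarith) hp h1
  have hdD : le d D := s8_mono_right (s8_smul_coeff_le one h0 hμν (by linarith)) hd hD
  exact ⟨D, hD, s8_le_trans hxd hdD⟩

theorem s8_Le2_trans {x y z : E} {μ ν p : ℝ} (hxy : Le2 x y μ) (hyz : Le2 y z ν)
    (hμ : 0 ≤ μ) (hν : 0 ≤ ν) (hz : le z (ConvexEA.smul p one)) (hp : 0 ≤ p)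
    (h1 : p + (ν + μ) ≤ 1) : Le2 x z (ν + μ) := by
  obtain ⟨d, hd, hxd⟩ := hxy
  obtain ⟨e, he, hye⟩ := hyz
  have hebound : le e (ConvexEA.smul (p+ν) one) := by
    obtain ⟨w, hw, hwle⟩ := s8_def_add_scalar hz hν hp (by linarith)
    have hwe : w = e := by rw [hw] at he; exact Option.some.inj he
    rw [hwe] at hwle; exact hwle
  obtain ⟨w1, hw1, _⟩ := s8_def_add_scalar hebound hμ (by linarith) (by linarith)
  obtain ⟨t, hto, hzt⟩ := oplus_assoc he hw1
  have ht : t = ConvexEA.smul (ν+μ) one := by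
    have h2 := s8_oplus_smul_one (E:=E) hν hμ (by linarith)
    rw [h2] at hto; exact (Option.some.inj hto).symm
  rw [ht] at hzt
  have hdw : le d w1 := s8_mono_left hye hd hw1
  exact ⟨w1, hzt, s8_le_trans hxd hdw⟩

theorem s8_Le2_add_const {x y X : E} {μ γ p : ℝ} (h : Le2 x y μ)
    (hX : oplus x (ConvexEA.smul γ one) = some X) (hy : le y (ConvexEA.smul p one))
    (hμ : 0 ≤ μ) (hγ : 0 ≤ γ) (hp : 0 ≤ p) (h1 : p + (μ + γ) ≤ 1) :
    Le2 X y (μ + γ) := by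
  obtain ⟨d, hd, hxd⟩ := h
  have hdb : le d (ConvexEA.smul (p+μ) one) := by
    obtain ⟨w, hw, hwle⟩ := s8_def_add_scalar hy hμ hp (by linarith)
    have hwd : w = d := by rw [hw] at hd; exact Option.some.inj hd
    rw [hwd] at hwle; exact hwle
  obtain ⟨w1, hw1, _⟩ := s8_def_add_scalar hdb hγ (by linarith) (by linarith)
  have hXw : le X w1 := s8_mono_left hxd hX hw1
  obtain ⟨t, hto, hyt⟩ := oplus_assoc hd hw1
  have ht : t = ConvexEA.smul (μ+γ) one := by
    have h2 := s8_oplus_smul_one (E:=E) hμ hγ (by linarith)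
    rw [h2] at hto; exact (Option.some.inj hto).symm
  rw [ht] at hyt
  exact ⟨w1, hyt, hXw⟩

theorem s8_le_of_Le2 {X y Y : E} {μ γ : ℝ} (h : Le2 X y μ) (hμ : 0 ≤ μ) (hμγ : μ ≤ γ)
    (hγ : γ ≤ 1) (hY : oplus y (ConvexEA.smul γ one) = some Y) : le X Y := by
  obtain ⟨d, hd, hXd⟩ := h
  have hdY : le d Y := s8_mono_right (s8_smul_coeff_le one hμ hμγ hγ) hd hY
  exact s8_le_trans hXd hdY

theorem s8_split_scalar {z X D : E} {γ₁ γ₂ : ℝ} (h1 : 0 ≤ γ₁) (h2 : 0 ≤ γ₂)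
    (h3 : γ₁ + γ₂ ≤ 1) (hD : oplus z (ConvexEA.smul (γ₁+γ₂) one) = some D)
    (hX : oplus z (ConvexEA.smul γ₁ one) = some X) :
    oplus X (ConvexEA.smul γ₂ one) = some D := by
  have hsum := s8_oplus_smul_one (E:=E) h1 h2 h3
  obtain ⟨X', hX', hXD⟩ := s8_assoc' hsum hD
  have hXX : X' = X := by rw [hX'] at hX; exact Option.some.inj hX
  rw [hXX] at hXD; exact hXD

end S8Cvx

section S8Both

variable {E : Type u} [EffectAlgebra E] [SEA E] [ConvexEA E]

theorem s8_multiples_comm (x : E) (M : ℕ) :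
    ∀ j k : ℕ, (j:ℝ) ≤ 2^M → (k:ℝ) ≤ 2^M →
      Commutes (ConvexEA.smul ((j:ℝ)/2^M) x) (ConvexEA.smul ((k:ℝ)/2^M) x) := by
  have hM : (0:ℝ) < 2^M := by positivity
  have hstep : ∀ j : ℕ, ((j:ℝ)+1) ≤ 2^M →
      oplus (ConvexEA.smul ((j:ℝ)/2^M) x) (ConvexEA.smul ((1:ℝ)/2^M) x)
        = some (ConvexEA.smul (((j:ℝ)+1)/2^M) x) := by
    intro j hj
    have h := ConvexEA.smul_add_coeff ((j:ℝ)/2^M) ((1:ℝ)/2^M) x (by positivity) (by positivity)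
      (by rw [← add_div]; exact (div_le_one hM).2 hj)
    rw [← add_div] at h
    exact h
  have haux : ∀ k : ℕ, (k:ℝ) ≤ 2^M →
      Commutes (ConvexEA.smul ((1:ℝ)/2^M) x) (ConvexEA.smul ((k:ℝ)/2^M) x) := by
    intro k
    induction k with
    | zero =>
      intro _
      rw [show ((0:ℕ):ℝ)/2^M = 0 by simp, s8_smul_zero]
      exact s8_comm_zero _
    | succ k ih =>
      intro hk1
      have hk1R : (k:ℝ) + 1 ≤ 2^M := by push_cast at hk1 ⊢; linarith
      have hk : (k:ℝ) ≤ 2^M := by linarith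
      have h1 := ih hk
      have h2 := hstep k hk1R
      have h3 := SEA.comm_oplus (ConvexEA.smul ((k:ℝ)/2^M) x) (ConvexEA.smul ((1:ℝ)/2^M) x)
          (ConvexEA.smul ((1:ℝ)/2^M) x) _ h1 rfl h2
      push_cast
      exact h3
  intro j
  induction j with
  | zero =>
    intro k _ _
    rw [show ((0:ℕ):ℝ)/2^M = 0 by simp, s8_smul_zero]
    exact s8_comm_zero' _
  | succ j ih =>
    intro k hj hk
    have hjR : (j:ℝ) + 1 ≤ 2^M := by push_cast at hj ⊢; linarith
    have hj' : (j:ℝ) ≤ 2^M := by linarith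
    have h1 : Commutes (ConvexEA.smul ((k:ℝ)/2^M) x) (ConvexEA.smul ((j:ℝ)/2^M) x) :=
      (ih k hj' hk).symm
    have h2 : Commutes (ConvexEA.smul ((k:ℝ)/2^M) x) (ConvexEA.smul ((1:ℝ)/2^M) x) :=
      (haux k hk).symm
    have h3 := hstep j hjR
    have h4 := SEA.comm_oplus _ _ _ _ h1 h2 h3
    push_cast
    exact h4.symm

theorem s8_central_dyadic (c : E) (j M : ℕ) (hj : (j:ℝ) ≤ 2^M) :
    Commutes c (ConvexEA.smul ((j:ℝ)/2^M) one) := by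
  have hM : (0:ℝ) < 2^M := by positivity
  have hb : (((2^M : ℕ)):ℝ) ≤ 2^M := by push_cast; exact le_rfl
  have hone : ∀ y : E, ConvexEA.smul (((2^M : ℕ):ℝ)/2^M) y = y := by
    intro y
    have hc : ((2^M : ℕ):ℝ)/(2:ℝ)^M = 1 := by
      push_cast
      exact div_self (ne_of_gt hM)
    rw [hc]
    exact ConvexEA.one_smul y
  have h1 : Commutes (ConvexEA.smul ((j:ℝ)/2^M) c) c := by
    have h := s8_multiples_comm c M j (2^M) hj hb
    rwa [hone c] at h
  have h2 : Commutes (ConvexEA.smul ((j:ℝ)/2^M) (perp c)) (perp c) := by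
    have h := s8_multiples_comm (perp c) M j (2^M) hj hb
    rwa [hone (perp c)] at h
  have h2' : Commutes (ConvexEA.smul ((j:ℝ)/2^M) (perp c)) c := by
    have h := SEA.comm_perp _ _ h2
    rwa [s8_perp_perp] at h
  have hsum : oplus (ConvexEA.smul ((j:ℝ)/2^M) c) (ConvexEA.smul ((j:ℝ)/2^M) (perp c))
      = some (ConvexEA.smul ((j:ℝ)/2^M) one) :=
    ConvexEA.smul_oplus _ _ _ _ (by positivity) ((div_le_one hM).2 hj) (s8_perp_spec c)
  exact SEA.comm_oplus _ _ _ _ h1.symm h2'.symm hsum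

theorem s8_central_half (c : E) : Commutes c (ConvexEA.smul (2⁻¹:ℝ) one) := by
  have h := s8_central_dyadic c 1 1 (by norm_num)
  rwa [show ((1:ℕ):ℝ)/2^1 = (2⁻¹:ℝ) by norm_num] at h

theorem s8_central_quarter (c : E) : Commutes c (ConvexEA.smul (4⁻¹:ℝ) one) := by
  have h := s8_central_dyadic c 1 2 (by norm_num)
  rwa [show ((1:ℕ):ℝ)/2^2 = (4⁻¹:ℝ) by norm_num] at h

theorem s8_half_seq (x b : E) :
    SEA.seq x (ConvexEA.smul (2⁻¹:ℝ) b) = ConvexEA.smul (2⁻¹:ℝ) (SEA.seq x b) :=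
  s8_double_eq (SEA.seq_oplus x (ConvexEA.smul (2⁻¹:ℝ) b) (ConvexEA.smul (2⁻¹:ℝ) b) b
    (s8_half_double b))

theorem s8_half_one_seq (x : E) :
    SEA.seq (ConvexEA.smul (2⁻¹:ℝ) one) x = ConvexEA.smul (2⁻¹:ℝ) x := by
  have h : Commutes (ConvexEA.smul (2⁻¹:ℝ) one) x := (s8_central_half x).symm
  show SEA.seq (ConvexEA.smul (2⁻¹:ℝ) one) x = ConvexEA.smul (2⁻¹:ℝ) x
  rw [h, s8_half_seq x one, s8_seq_one]

theorem s8_transfer_half {c x : E} (h : Commutes c x) :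
    Commutes c (ConvexEA.smul (2⁻¹:ℝ) x) := by
  have h1 := s8_central_half c
  have h2 := SEA.comm_seq (ConvexEA.smul (2⁻¹:ℝ) one) x c h1 h
  rwa [s8_half_one_seq x] at h2

theorem s8_transfer_quarter {c x : E} (h : Commutes c x) :
    Commutes c (ConvexEA.smul (4⁻¹:ℝ) x) := by
  have h2 := s8_transfer_half (s8_transfer_half h)
  rwa [s8_halfhalf x] at h2

end S8Both

end EffectAlgebra

open EffectAlgebra in
/-- in a strongly archimedean convex SEA with property A, commutants are
closed under norm limits of sequences of mutually commuting elements. -/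
theorem stmt8 {E : Type u} [EffectAlgebra E] [SEA E] [ConvexEA E]
    (harch : StronglyArchimedean E) (hA : PropertyA E) (S : Set E)
    (f : ℕ → E) (a : E) (hf : ∀ n, f n ∈ commutant S)
    (hcomm : ∀ m n, Commutes (f m) (f n)) (hlim : NormLimit f a) :
    a ∈ commutant S := by
  classical
  intro s hs
  -- basic facts about powers of 1/2
  have hpow_pos : ∀ k : ℕ, (0:ℝ) < (2⁻¹:ℝ)^k := fun k => by positivity
  have hpow_le_one : ∀ k : ℕ, ((2⁻¹:ℝ))^k ≤ 1 := fun k =>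
    pow_le_one₀ (by norm_num) (by norm_num)
  have hpow_mono : ∀ {k l : ℕ}, k ≤ l → ((2⁻¹:ℝ))^l ≤ (2⁻¹:ℝ)^k := fun h =>
    pow_le_pow_of_le_one (by norm_num) (by norm_num) h
  have hpow_succ : ∀ k : ℕ, ((2⁻¹:ℝ))^k * 2⁻¹ = (2⁻¹:ℝ)^(k+1) := fun k => (pow_succ _ _).symm
  -- choose the subsequence
  have hN : ∀ n : ℕ, ∃ Nn : ℕ, ∀ m ≥ Nn, DistLE (f m) a ((2⁻¹:ℝ)^(n+4)) := fun n =>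
    hlim _ (hpow_pos (n+4))
  choose N hNs using hN
  have hD : ∀ n, DistLE (f (N n)) a ((2⁻¹:ℝ)^(n+4)) := fun n => hNs n (N n) (le_refl _)
  have hmin : ∀ n : ℕ, min ((2⁻¹:ℝ)^(n+4)) 1 / 2 = (2⁻¹:ℝ)^(n+5) := by
    intro n
    rw [min_eq_left (hpow_le_one _), ← hpow_succ]
    ring
  have hA1 : ∀ n, Le2 (ConvexEA.smul (2⁻¹:ℝ) (f (N n))) (ConvexEA.smul (2⁻¹:ℝ) a)
      ((2⁻¹:ℝ)^(n+5)) := by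
    intro n
    have h := (hD n).1
    rw [hmin n] at h
    exact h
  have hA2 : ∀ n, Le2 (ConvexEA.smul (2⁻¹:ℝ) a) (ConvexEA.smul (2⁻¹:ℝ) (f (N n)))
      ((2⁻¹:ℝ)^(n+5)) := by
    intro n
    have h := (hD n).2
    rw [hmin n] at h
    exact h
  -- quarter scale versions
  have hB1 : ∀ n, Le2 (ConvexEA.smul (4⁻¹:ℝ) (f (N n))) (ConvexEA.smul (4⁻¹:ℝ) a)
      ((2⁻¹:ℝ)^(n+6)) := by
    intro n
    have h := s8_Le2_halve (hA1 n) (hpow_pos _).le (hpow_le_one _)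
    rw [hpow_succ, s8_halfhalf, s8_halfhalf] at h
    exact h
  have hB2 : ∀ n, Le2 (ConvexEA.smul (4⁻¹:ℝ) a) (ConvexEA.smul (4⁻¹:ℝ) (f (N n)))
      ((2⁻¹:ℝ)^(n+6)) := by
    intro n
    have h := s8_Le2_halve (hA2 n) (hpow_pos _).le (hpow_le_one _)
    rw [hpow_succ, s8_halfhalf, s8_halfhalf] at h
    exact h
  have hqb : ∀ x : E, le (ConvexEA.smul (4⁻¹:ℝ) x) (ConvexEA.smul (4⁻¹:ℝ) one) := fun x =>
    s8_le_smul_one x (by norm_num) (by norm_num)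
  -- the shift constants
  obtain ⟨c, hcdef⟩ : ∃ cc : ℕ → ℝ, cc = fun n => 4⁻¹ - (2⁻¹:ℝ)^(n+4) := ⟨_, rfl⟩
  have hcle : ∀ k : ℕ, (2⁻¹:ℝ)^(k+4) ≤ 4⁻¹ := by
    intro k
    calc ((2⁻¹:ℝ))^(k+4) ≤ (2⁻¹:ℝ)^2 := hpow_mono (by omega)
    _ = 4⁻¹ := by norm_num
  have hcle6 : ∀ k : ℕ, (2⁻¹:ℝ)^(k+6) ≤ 4⁻¹ := by
    intro k
    calc ((2⁻¹:ℝ))^(k+6) ≤ (2⁻¹:ℝ)^2 := hpow_mono (by omega)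
    _ = 4⁻¹ := by norm_num
  have hc0 : ∀ n, 0 ≤ c n := by
    intro n
    have h1 := hcle n
    simp only [hcdef]
    linarith
  have hc4 : ∀ n, c n ≤ 4⁻¹ := by
    intro n
    have h1 := (hpow_pos (n+4)).le
    simp only [hcdef]
    linarith
  -- define the ascending sequence g and its candidate supremum gi
  have h44 : oplus (ConvexEA.smul (4⁻¹:ℝ) (one:E)) (ConvexEA.smul (4⁻¹:ℝ) one)
      = some (ConvexEA.smul (2⁻¹:ℝ) one) := s8_quarter_double one
  have hgdef : ∀ n, ∃ w,
      oplus (ConvexEA.smul (4⁻¹:ℝ) (f (N n))) (ConvexEA.smul (c n) one) = some w := by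
    intro n
    obtain ⟨w, hw, _⟩ := s8_oplus_le_oplus (hqb (f (N n)))
      (s8_smul_coeff_le one (hc0 n) (hc4 n) (by norm_num)) h44
    exact ⟨w, hw⟩
  choose g hg using hgdef
  obtain ⟨gi, hgi, higb⟩ :=
    s8_oplus_le_oplus (hqb a) (s8_le_refl (ConvexEA.smul (4⁻¹:ℝ) one)) h44
  have hgb : ∀ n, le (g n) (ConvexEA.smul (2⁻¹:ℝ) one) := by
    intro n
    obtain ⟨w, hw, hwle⟩ := s8_oplus_le_oplus (hqb (f (N n)))
      (s8_smul_coeff_le one (hc0 n) (hc4 n) (by norm_num)) h44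
    have hweq : w = g n := by
      have h' := hg n
      rw [hw] at h'
      exact Option.some.inj h'
    rw [hweq] at hwle
    exact hwle
  have hgq : ∀ n, Le2 (g n) (ConvexEA.smul (4⁻¹:ℝ) a) ((2⁻¹:ℝ)^(n+6) + c n) := by
    intro n
    refine s8_Le2_add_const (hB1 n) (hg n) (hqb a) (hpow_pos _).le (hc0 n) (by norm_num) ?_
    have h1 := hcle6 n
    have h2 := hc4 n
    linarith
  -- g n ≤ gi
  have hgle : ∀ n, le (g n) gi := by
    intro n
    have hco : (2⁻¹:ℝ)^(n+6) + c n ≤ 4⁻¹ := by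
      have h1 := hpow_mono (show n+4 ≤ n+6 by omega)
      simp only [hcdef]
      linarith
    have hnn : (0:ℝ) ≤ (2⁻¹:ℝ)^(n+6) + c n := by
      have h1 := (hpow_pos (n+6)).le
      have h2 := hc0 n
      linarith
    exact s8_le_of_Le2 (hgq n) hnn hco (by norm_num) hgi
  -- g ascending
  have hasc : ∀ n, le (g n) (g (n+1)) := by
    intro n
    have hnn : (0:ℝ) ≤ (2⁻¹:ℝ)^(n+6) + c n := by
      have h1 := (hpow_pos (n+6)).le
      have h2 := hc0 n
      linarith
    have hside : (4⁻¹:ℝ) + ((2⁻¹:ℝ)^(n+1+6) + ((2⁻¹:ℝ)^(n+6) + c n)) ≤ 1 := by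
      have e1 : ((2⁻¹:ℝ))^(n+1+6) ≤ 4⁻¹ := by
        calc ((2⁻¹:ℝ))^(n+1+6) ≤ (2⁻¹:ℝ)^2 := hpow_mono (by omega)
        _ = 4⁻¹ := by norm_num
      have e2 := hcle6 n
      have e3 := hc4 n
      linarith
    have h2 := s8_Le2_trans (hgq n) (hB2 (n+1)) hnn (hpow_pos _).le (hqb (f (N (n+1))))
      (by norm_num) hside
    have hkeyc : (2⁻¹:ℝ)^(n+1+6) + ((2⁻¹:ℝ)^(n+6) + c n) ≤ c (n+1) := by
      simp only [hcdef]
      have e5 : (2⁻¹:ℝ)^(n+1+4) = (2⁻¹:ℝ)^(n+4) * 2⁻¹ := by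
        rw [show n+1+4 = (n+4)+1 by omega, pow_succ]
      have e6 : (2⁻¹:ℝ)^(n+6) = (2⁻¹:ℝ)^(n+1+4) * 2⁻¹ := by
        rw [show n+6 = (n+1+4)+1 by omega, pow_succ]
      have e7 : (2⁻¹:ℝ)^(n+1+6) = (2⁻¹:ℝ)^(n+6) * 2⁻¹ := by
        rw [show n+1+6 = (n+6)+1 by omega, pow_succ]
      have hP := (hpow_pos (n+4)).le
      linarith
    have hc1 : c (n+1) ≤ 1 := by
      have h3 := hc4 (n+1)
      linarith
    have hnn2 : (0:ℝ) ≤ (2⁻¹:ℝ)^(n+1+6) + ((2⁻¹:ℝ)^(n+6) + c n) := by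
      have h3 := (hpow_pos (n+1+6)).le
      linarith
    exact s8_le_of_Le2 h2 hnn2 hkeyc hc1 (hg (n+1))
  -- gi is the least upper bound
  have hsupleast : ∀ b : E, (∀ n, le (g n) b) → le gi b := by
    intro b hb
    have hkey : ∀ n, Le2 gi (g n) ((2⁻¹:ℝ)^(n+3)) := by
      intro n
      have h1 : Le2 gi (ConvexEA.smul (4⁻¹:ℝ) (f (N n))) ((2⁻¹:ℝ)^(n+6) + 4⁻¹) := by
        refine s8_Le2_add_const (hB2 n) hgi (hqb (f (N n))) (hpow_pos _).le (by norm_num)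
          (by norm_num) ?_
        have h2 := hcle6 n
        linarith
      obtain ⟨D, hD, hgiD⟩ := h1
      have hco : ((2⁻¹:ℝ)^(n+6) + 4⁻¹) = c n + ((2⁻¹:ℝ)^(n+6) + (2⁻¹:ℝ)^(n+4)) := by
        simp only [hcdef]
        ring
      rw [hco] at hD
      have hnn : (0:ℝ) ≤ (2⁻¹:ℝ)^(n+6) + (2⁻¹:ℝ)^(n+4) := by
        have h2 := (hpow_pos (n+6)).le
        have h3 := (hpow_pos (n+4)).le
        linarith
      have hs1 : c n + ((2⁻¹:ℝ)^(n+6) + (2⁻¹:ℝ)^(n+4)) ≤ 1 := by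
        have h2 := hc4 n
        have h3 := hcle6 n
        have h4 := hcle n
        linarith
      have hsplit := s8_split_scalar (hc0 n) hnn hs1 hD (hg n)
      have h2 : Le2 gi (g n) ((2⁻¹:ℝ)^(n+6) + (2⁻¹:ℝ)^(n+4)) := ⟨D, hsplit, hgiD⟩
      have hmono : (2⁻¹:ℝ)^(n+6) + (2⁻¹:ℝ)^(n+4) ≤ (2⁻¹:ℝ)^(n+3) := by
        have e4 : (2⁻¹:ℝ)^(n+4) = (2⁻¹:ℝ)^(n+3) * 2⁻¹ := by
          rw [show n+4 = (n+3)+1 by omega, pow_succ]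
        have e5 : (2⁻¹:ℝ)^(n+5) = (2⁻¹:ℝ)^(n+4) * 2⁻¹ := by
          rw [show n+5 = (n+4)+1 by omega, pow_succ]
        have e6 : (2⁻¹:ℝ)^(n+6) = (2⁻¹:ℝ)^(n+5) * 2⁻¹ := by
          rw [show n+6 = (n+5)+1 by omega, pow_succ]
        have hP := (hpow_pos (n+3)).le
        linarith
      have hs2 : (2⁻¹:ℝ) + (2⁻¹:ℝ)^(n+3) ≤ 1 := by
        have h3 : ((2⁻¹:ℝ))^(n+3) ≤ (2⁻¹:ℝ)^1 := hpow_mono (by omega)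
        have h4 : ((2⁻¹:ℝ))^1 = 2⁻¹ := by norm_num
        linarith
      exact s8_Le2_mono h2 (hgb n) hnn hmono (by norm_num) hs2
    have hkey2 : ∀ n, Le2 (ConvexEA.smul (2⁻¹:ℝ) gi) (ConvexEA.smul (2⁻¹:ℝ) b)
        ((2⁻¹:ℝ)^(n+4)) := by
      intro n
      have h1 := s8_Le2_halve (hkey n) (hpow_pos _).le (hpow_le_one _)
      obtain ⟨d, hd, hgid⟩ := h1
      have hhb : le (ConvexEA.smul (2⁻¹:ℝ) (g n)) (ConvexEA.smul (2⁻¹:ℝ) b) :=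
        s8_smul_le (by norm_num) (by norm_num) (hb n)
      have hbbound : le (ConvexEA.smul (2⁻¹:ℝ) b) (ConvexEA.smul (2⁻¹:ℝ) (one:E)) :=
        s8_le_smul_one b (by norm_num) (by norm_num)
      have hside : (2⁻¹:ℝ) + (2⁻¹:ℝ)^(n+3) * 2⁻¹ ≤ 1 := by
        have h3 : ((2⁻¹:ℝ))^(n+3) ≤ 1 := hpow_le_one _
        have h4 := (hpow_pos (n+3)).le
        linarith
      obtain ⟨D, hD, _⟩ := s8_def_add_scalar hbbound
        (by positivity : (0:ℝ) ≤ (2⁻¹:ℝ)^(n+3) * 2⁻¹) (by norm_num) hside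
      have hfin : Le2 (ConvexEA.smul (2⁻¹:ℝ) gi) (ConvexEA.smul (2⁻¹:ℝ) b)
          ((2⁻¹:ℝ)^(n+3) * 2⁻¹) :=
        ⟨D, hD, s8_le_trans hgid (s8_mono_left hhb hd hD)⟩
      rw [hpow_succ] at hfin
      exact hfin
    have hhalf : le (ConvexEA.smul (2⁻¹:ℝ) gi) (ConvexEA.smul (2⁻¹:ℝ) b) := by
      apply harch _ _ (ConvexEA.smul (2⁻¹:ℝ) one)
      intro m
      have hm1 : (0:ℝ) < (m:ℝ) + 1 := by positivity
      have hmnn : (0:ℝ) ≤ 1/((m:ℝ)+1) := by positivity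
      have hmle : (1:ℝ)/((m:ℝ)+1) ≤ 1 := by
        rw [div_le_one hm1]
        linarith
      have hms : ConvexEA.smul (1/((m:ℝ)+1)) (ConvexEA.smul (2⁻¹:ℝ) (one:E))
          = ConvexEA.smul (2⁻¹ * (1/((m:ℝ)+1))) one :=
        ConvexEA.smul_smul 2⁻¹ (1/((m:ℝ)+1)) one (by norm_num) (by norm_num) hmnn hmle
      have hnat : (m:ℝ) + 1 ≤ 2^(m+3) := by
        have h1 : m + 1 ≤ 2^(m+3) := by
          have h2 := Nat.lt_two_pow_self (n := m)
          have h3 : (2:ℕ)^m ≤ 2^(m+3) := Nat.pow_le_pow_right (by norm_num) (by omega)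
          omega
        exact_mod_cast h1
      have hcoe : ((2⁻¹:ℝ))^(m+4) ≤ 2⁻¹ * (1/((m:ℝ)+1)) := by
        have hinv : ((2⁻¹:ℝ))^(m+3) = 1/(2:ℝ)^(m+3) := by
          rw [one_div, ← inv_pow]
        have h5 : (1:ℝ)/(2:ℝ)^(m+3) ≤ 1/((m:ℝ)+1) :=
          one_div_le_one_div_of_le hm1 hnat
        have h6 : ((2⁻¹:ℝ))^(m+4) = (2⁻¹:ℝ)^(m+3) * 2⁻¹ := by
          rw [show m+4 = (m+3)+1 by omega, pow_succ]
        rw [h6, hinv]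
        calc (1/(2:ℝ)^(m+3)) * 2⁻¹ ≤ (1/((m:ℝ)+1)) * 2⁻¹ :=
              mul_le_mul_of_nonneg_right h5 (by norm_num)
        _ = 2⁻¹ * (1/((m:ℝ)+1)) := by ring
      have hside2 : (2⁻¹:ℝ) + 2⁻¹ * (1/((m:ℝ)+1)) ≤ 1 := by
        have h7 : (2⁻¹:ℝ) * (1/((m:ℝ)+1)) ≤ 2⁻¹ * 1 := by
          apply mul_le_mul_of_nonneg_left hmle (by norm_num)
        linarith
      have hmono2 := s8_Le2_mono (hkey2 m) (s8_le_smul_one b (by norm_num) (by norm_num))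
        (hpow_pos (m+4)).le hcoe (by norm_num) hside2
      obtain ⟨d, hd, hgid⟩ := hmono2
      refine ⟨d, ?_, hgid⟩
      rw [hms]
      exact hd
    exact s8_unscale hhalf
  -- centrality of the shift constants
  have hcentral_c : ∀ (x : E) (n : ℕ), Commutes x (ConvexEA.smul (c n) one) := by
    intro x n
    have h1 : (1:ℕ) ≤ 2^(n+2) := Nat.one_le_two_pow
    have hrep : c n = ((2^(n+2) - 1 : ℕ):ℝ)/2^(n+4) := by
      have hcast : ((2^(n+2) - 1 : ℕ):ℝ) = (2:ℝ)^(n+2) - 1 := by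
        push_cast [h1]
        ring
      rw [hcast]
      simp only [hcdef]
      have hne : ((2:ℝ))^(n+4) ≠ 0 := by positivity
      rw [eq_div_iff hne]
      have e1 : (2:ℝ)^(n+4) = 2^(n+2)*4 := by ring
      have e2 : ((2⁻¹:ℝ))^(n+4) = ((2:ℝ)^(n+4))⁻¹ := by rw [← inv_pow]
      rw [e2, e1]
      have hne2 : ((2:ℝ))^(n+2) ≠ 0 := by positivity
      field_simp
    rw [hrep]
    apply s8_central_dyadic
    have h2 : (2:ℕ)^(n+2) - 1 ≤ 2^(n+4) := by
      have h3 : (2:ℕ)^(n+2) ≤ 2^(n+4) := Nat.pow_le_pow_right (by norm_num) (by omega)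
      omega
    calc ((2^(n+2) - 1 : ℕ):ℝ) ≤ (((2:ℕ)^(n+4):ℕ):ℝ) := by exact_mod_cast h2
    _ = (2:ℝ)^(n+4) := by push_cast; ring
  -- commutation facts for g
  have hcomm_g : ∀ n (x : E), Commutes x (f (N n)) → Commutes x (g n) := by
    intro n x hx
    exact SEA.comm_oplus _ _ _ _ (s8_transfer_quarter hx) (hcentral_c x n) (hg n)
  have hgcomm : ∀ m n, Commutes (g m) (g n) := by
    intro m n
    have h1 : Commutes (f (N m)) (g n) := hcomm_g n (f (N m)) (hcomm (N m) (N n))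
    exact (hcomm_g m (g n) h1.symm).symm
  have hgs : ∀ n, Commutes (g n) s := fun n => (hcomm_g n s (hf (N n) s hs).symm).symm
  -- apply property A
  have hgis : Commutes gi s := hA g gi s hasc hgcomm ⟨hgle, hsupleast⟩ hgs
  -- extract commutation with a
  have hsX : Commutes s (perp gi) := SEA.comm_perp s gi hgis.symm
  obtain ⟨Y, hY, hqaY⟩ := oplus_assoc hgi (s8_perp_spec gi)
  have hsY : Commutes s Y := SEA.comm_oplus _ _ _ _ (s8_central_quarter s) hsX hY
  have hperpY : perp Y = ConvexEA.smul (4⁻¹:ℝ) a := by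
    apply s8_perp_eq_of
    rw [oplus_comm]
    exact hqaY
  have hsqa : Commutes s (ConvexEA.smul (4⁻¹:ℝ) a) := by
    have h := SEA.comm_perp s Y hsY
    rwa [hperpY] at h
  have hsha : Commutes s (ConvexEA.smul (2⁻¹:ℝ) a) :=
    SEA.comm_oplus _ _ _ _ hsqa hsqa (s8_quarter_double a)
  have hsa : Commutes s a := SEA.comm_oplus _ _ _ _ hsha hsha (s8_half_double a)
  exact hsa.symm
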